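/- Let Cl(p,q,r) be a Clifford algebra of dimension 2^n with n = p+q+r. For any odd m, the centralizer of the grade-m subspace is contained in the centralizer of the grade-(m+1) subspace: if X commutes with every element of Cl^m(p,q,r), then X commutes with every element of Cl^{m+1}(p,q,r). -/

import Mathlib

open CliffordAlgebra

noncomputable section

/-- Diagonal weights: `p` entries `+1`, `q` entries `-1`, `r` entries `0`. -/
def cliffSig (p q : ℕ) (i : ℕ) : ℝ := if i < p then 1 else if i < p + q then -1 else 0

/-- The quadratic form of signature `(p, q, r)` on `ℝ^(p+q+r)`. -/
def Qf (p q r : ℕ) : QuadraticForm ℝ (Fin (p + q + r) → ℝ) :=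
  QuadraticMap.weightedSumSquares ℝ (fun i : Fin (p + q + r) => cliffSig p q (i : ℕ))

/-- The `i`-th generator `e_i` of `Cl(p,q,r)`. -/
def gen (p q r : ℕ) (i : Fin (p + q + r)) : CliffordAlgebra (Qf p q r) :=
  ι (Qf p q r) (Pi.single i 1)

/-- The grade-`m` subspace `Cl^m(p,q,r)`: span of products of `m` distinct generators
with increasing indices. -/
def gradeSubspace (p q r m : ℕ) : Submodule ℝ (CliffordAlgebra (Qf p q r)) :=
  Submodule.span ℝ {x | ∃ l : List (Fin (p + q + r)),
    l.Chain' (· < ·) ∧ l.length = m ∧ x = (l.map (gen p q r)).prod}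

namespace Stmt6Aux

variable {p q r : ℕ}

local notation "nn" => p + q + r

/-- weight -/
def w (i : Fin nn) : ℝ := cliffSig p q (i : ℕ)

/-- coordinate space -/
abbrev E (p q r : ℕ) := Finset (Fin (p + q + r)) → ℝ

def eps (i : Fin nn) (W : Finset (Fin nn)) : ℝ := (-1 : ℝ) ^ (W.filter (fun j => j < i)).card

lemma eps_sq (i : Fin nn) (W : Finset (Fin nn)) : eps i W * eps i W = 1 := by
  rw [eps, ← pow_add]
  exact (neg_one_pow_eq_one_iff_even (by norm_num)).2 ⟨_, rfl⟩

lemma eps_ne_zero (i : Fin nn) (W : Finset (Fin nn)) : eps i W ≠ 0 := by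
  intro h
  have := eps_sq i W
  rw [h] at this; norm_num at this

lemma eps_insert_of_ge {i j : Fin nn} (W : Finset (Fin nn)) (h : ¬ j < i) :
    eps i (insert j W) = eps i W := by
  unfold eps
  rw [Finset.filter_insert, if_neg h]

lemma eps_erase_of_ge {i j : Fin nn} (W : Finset (Fin nn)) (h : ¬ j < i) :
    eps i (W.erase j) = eps i W := by
  unfold eps
  rw [Finset.filter_erase, Finset.erase_eq_of_notMem (by simp [h])]

lemma eps_insert_of_lt {i j : Fin nn} {W : Finset (Fin nn)} (h : j < i) (hj : j ∉ W) :
    eps i (insert j W) = -eps i W := by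
  unfold eps
  rw [Finset.filter_insert, if_pos h, Finset.card_insert_of_notMem (by simp [hj]), pow_succ]
  ring

lemma eps_erase_of_lt {i j : Fin nn} {W : Finset (Fin nn)} (h : j < i) (hj : j ∈ W) :
    eps i (W.erase j) = -eps i W := by
  have : eps i (insert j (W.erase j)) = -eps i (W.erase j) :=
    eps_insert_of_lt h (Finset.notMem_erase _ _)
  rw [Finset.insert_erase hj] at this
  rw [this]; ring

/-- the `i`-th generator operator on coordinates -/
def cop (i : Fin nn) : E p q r →ₗ[ℝ] E p q r where
  toFun φ := fun W => eps i W * (if i ∈ W then φ (W.erase i) else w i * φ (insert i W))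
  map_add' φ ψ := by
    funext W
    by_cases h : i ∈ W <;> simp [h] <;> ring
  map_smul' c φ := by
    funext W
    by_cases h : i ∈ W <;> simp [h] <;> ring

lemma cop_apply (i : Fin nn) (φ : E p q r) (W : Finset (Fin nn)) :
    cop i φ W = eps i W * (if i ∈ W then φ (W.erase i) else w i * φ (insert i W)) := rfl

lemma cop_cop_self (i : Fin nn) (φ : E p q r) :
    cop i (cop i φ) = w i • φ := by
  funext W
  by_cases h : i ∈ W
  · rw [cop_apply, if_pos h, cop_apply, if_neg (Finset.notMem_erase _ _),
      Finset.insert_erase h, eps_erase_of_ge _ (lt_irrefl i)]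
    have := eps_sq i W
    simp only [Pi.smul_apply, smul_eq_mul]
    linear_combination (w i * φ W) * this
  · rw [cop_apply, if_neg h, cop_apply, if_pos (Finset.mem_insert_self i W),
      Finset.erase_insert h, eps_insert_of_ge _ (lt_irrefl i)]
    have := eps_sq i W
    simp only [Pi.smul_apply, smul_eq_mul]
    linear_combination (w i * φ W) * this

lemma cop_cop_anti_lt {i j : Fin nn} (hij : i < j) (φ : E p q r) :
    cop i (cop j φ) = - cop j (cop i φ) := by
  have hne : i ≠ j := ne_of_lt hij
  have hne' : j ≠ i := (ne_of_lt hij).symm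
  funext W
  simp only [Pi.neg_apply]
  by_cases hi : i ∈ W <;> by_cases hj : j ∈ W
  · -- both in W
    rw [cop_apply, if_pos hi, cop_apply, if_pos (Finset.mem_erase.2 ⟨hne', hj⟩),
      cop_apply, if_pos hj, cop_apply, if_pos (Finset.mem_erase.2 ⟨hne, hi⟩),
      eps_erase_of_lt hij hi, eps_erase_of_ge _ (not_lt.2 hij.le),
      Finset.erase_right_comm (a := i) (b := j)]
    ring
  · -- i ∈ W, j ∉ W
    have hj' : j ∉ W.erase i := fun h => hj (Finset.mem_of_mem_erase h)
    have hi' : i ∈ insert j W := Finset.mem_insert_of_mem hi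
    rw [cop_apply, if_pos hi, cop_apply, if_neg hj',
      cop_apply, if_neg hj, cop_apply, if_pos hi',
      eps_erase_of_lt hij hi, eps_insert_of_ge _ (not_lt.2 hij.le),
      Finset.erase_insert_of_ne hne']
    ring
  · -- i ∉ W, j ∈ W
    have hj' : j ∈ insert i W := Finset.mem_insert_of_mem hj
    have hi' : i ∉ W.erase j := fun h => hi (Finset.mem_of_mem_erase h)
    rw [cop_apply, if_neg hi, cop_apply, if_pos hj',
      cop_apply, if_pos hj, cop_apply, if_neg hi',
      eps_insert_of_lt hij hi, eps_erase_of_ge _ (not_lt.2 hij.le),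
      Finset.erase_insert_of_ne hne]
    ring
  · -- both not in W
    have hj' : j ∉ insert i W := by simp [hj, hne']
    have hi' : i ∉ insert j W := by simp [hi, hne]
    rw [cop_apply, if_neg hi, cop_apply, if_neg hj',
      cop_apply, if_neg hj, cop_apply, if_neg hi',
      eps_insert_of_lt hij hi, eps_insert_of_ge _ (not_lt.2 hij.le),
      Finset.insert_comm]
    ring

lemma cop_cop_anti {i j : Fin nn} (hij : i ≠ j) (φ : E p q r) :
    cop i (cop j φ) = - cop j (cop i φ) := by
  rcases hij.lt_or_gt with h | h
  · exact cop_cop_anti_lt h φ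
  · rw [cop_cop_anti_lt h φ, neg_neg]

/-- linear map sending a vector to its Clifford operator -/
def cVec : (Fin nn → ℝ) →ₗ[ℝ] Module.End ℝ (E p q r) where
  toFun v := ∑ i, v i • (cop i : E p q r →ₗ[ℝ] E p q r)
  map_add' u v := by
    simp [add_smul, Finset.sum_add_distrib]
  map_smul' c v := by
    simp [Finset.smul_sum, smul_smul]

lemma Qf_apply (v : Fin nn → ℝ) :
    Qf p q r v = ∑ i, w (p := p) (q := q) (r := r) i * (v i * v i) := by
  simp [Qf, QuadraticMap.weightedSumSquares_apply, w, smul_eq_mul]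

lemma cVec_sq (v : Fin nn → ℝ) :
    cVec (p := p) (q := q) (r := r) v * cVec (p := p) (q := q) (r := r) v = algebraMap ℝ (Module.End ℝ (E p q r)) (Qf p q r v) := by
  have expand : cVec (p := p) (q := q) (r := r) v * cVec (p := p) (q := q) (r := r) v
      = ∑ i, ∑ j, (v i * v j) • ((cop i : E p q r →ₗ[ℝ] E p q r) * cop j) := by
    show (∑ i, v i • (cop i : E p q r →ₗ[ℝ] E p q r)) * (∑ j, v j • cop j) = _
    simp only [Finset.sum_mul, Finset.mul_sum, smul_mul_assoc, mul_smul_comm, smul_smul,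
      Finset.smul_sum]
    rw [Finset.sum_comm]
    refine Finset.sum_congr rfl fun i _ => Finset.sum_congr rfl fun j _ => ?_
    rw [mul_comm (v j) (v i)]
  have anti : ∀ i j : Fin nn, i ≠ j →
      ((cop i : E p q r →ₗ[ℝ] E p q r) * cop j) = -((cop j : E p q r →ₗ[ℝ] E p q r) * cop i) := by
    intro i j h
    refine LinearMap.ext fun φ => ?_
    exact cop_cop_anti h φ
  have diag : ∀ i : Fin nn, ((cop i : E p q r →ₗ[ℝ] E p q r) * cop i)
      = w (p := p) (q := q) (r := r) i • (1 : Module.End ℝ (E p q r)) := by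
    intro i
    refine LinearMap.ext fun φ => ?_
    exact cop_cop_self i φ
  -- symmetrize
  have twice : (2 : ℝ) • (cVec (p := p) (q := q) (r := r) v * cVec (p := p) (q := q) (r := r) v)
      = (2 : ℝ) • ∑ i, (v i * v i) • ((cop i : E p q r →ₗ[ℝ] E p q r) * cop i) := by
    rw [expand]
    rw [two_smul, two_smul]
    nth_rewrite 2 [Finset.sum_comm]
    rw [← Finset.sum_add_distrib, ← Finset.sum_add_distrib]
    refine Finset.sum_congr rfl fun i _ => ?_
    rw [← Finset.sum_add_distrib]
    rw [show (v i * v i) • ((cop i : E p q r →ₗ[ℝ] E p q r) * cop i) +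
        (v i * v i) • ((cop i : E p q r →ₗ[ℝ] E p q r) * cop i)
        = ∑ j, (if j = i then ((v i * v i) • ((cop i : E p q r →ₗ[ℝ] E p q r) * cop i) +
            (v i * v i) • ((cop i : E p q r →ₗ[ℝ] E p q r) * cop i)) else 0) by
      rw [Finset.sum_ite_eq' Finset.univ i]; simp]
    refine Finset.sum_congr rfl fun j _ => ?_
    by_cases h : j = i
    · subst h; simp
    · rw [if_neg h, anti j i h, mul_comm (v j) (v i)]
      simp
  have := smul_right_injective (Module.End ℝ (E p q r)) (two_ne_zero (α := ℝ)) twice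
  rw [this, Qf_apply]
  rw [map_sum]
  refine Finset.sum_congr rfl fun i _ => ?_
  rw [diag, smul_smul, Module.algebraMap_end_eq_smul_id, mul_comm (w i) (v i * v i)]
  rfl

/-- The representation of the Clifford algebra on `E`. -/
def rep (p q r : ℕ) : CliffordAlgebra (Qf p q r) →ₐ[ℝ] Module.End ℝ (E p q r) :=
  CliffordAlgebra.lift (Qf p q r) ⟨cVec, cVec_sq⟩

lemma rep_gen (i : Fin nn) : rep p q r (gen p q r i) = cop i := by
  rw [gen, rep, CliffordAlgebra.lift_ι_apply]
  show ∑ j, (Pi.single i (1:ℝ) : Fin nn → ℝ) j • (cop j : E p q r →ₗ[ℝ] E p q r) = cop i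
  rw [Finset.sum_eq_single i]
  · simp
  · intro j _ hj
    rw [Pi.single_eq_of_ne hj]; simp
  · simp

/-- coordinates -/
def theta (p q r : ℕ) : CliffordAlgebra (Qf p q r) →ₗ[ℝ] E p q r where
  toFun x := rep p q r x (Pi.single ∅ 1)
  map_add' x y := by simp
  map_smul' c x := by simp

lemma gen_sq (i : Fin nn) :
    gen p q r i * gen p q r i = algebraMap ℝ _ (w (p := p) (q := q) (r := r) i) := by
  rw [gen, CliffordAlgebra.ι_sq_scalar]
  congr 1
  rw [Qf_apply, Finset.sum_eq_single i]
  · simp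
  · intro j _ hj
    rw [Pi.single_eq_of_ne hj]; ring
  · simp

lemma gen_anticomm {i j : Fin nn} (hij : i ≠ j) :
    gen p q r i * gen p q r j = -(gen p q r j * gen p q r i) := by
  have h := CliffordAlgebra.ι_mul_ι_add_swap (Q := Qf p q r)
    (Pi.single i 1) (Pi.single j 1)
  have hpolar : QuadraticMap.polar (Qf p q r) (Pi.single i 1) (Pi.single j 1) = 0 := by
    simp only [QuadraticMap.polar, Qf_apply, Pi.add_apply]
    rw [← Finset.sum_sub_distrib, ← Finset.sum_sub_distrib]
    apply Finset.sum_eq_zero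
    intro k _
    by_cases hki : k = i
    · subst hki
      rw [Pi.single_eq_same, Pi.single_eq_of_ne hij]; ring
    · rw [Pi.single_eq_of_ne hki]
      by_cases hkj : k = j
      · subst hkj; rw [Pi.single_eq_same]; ring
      · rw [Pi.single_eq_of_ne hkj]; ring
  rw [hpolar, map_zero] at h
  rw [← gen, ← gen] at h
  exact eq_neg_of_add_eq_zero_left h

/-- blade over a list -/
def blade (l : List (Fin nn)) : CliffordAlgebra (Qf p q r) :=
  (l.map (gen p q r)).prod

/-- blade over a finset -/
def bladeF (V : Finset (Fin nn)) : CliffordAlgebra (Qf p q r) :=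
  blade (V.sort (· ≤ ·))

@[simp] lemma blade_nil : blade (p := p) (q := q) (r := r) [] = 1 := rfl

@[simp] lemma blade_cons (i : Fin nn) (l : List (Fin nn)) :
    blade (i :: l) = gen p q r i * blade l := by
  simp [blade]

@[simp] lemma bladeF_empty : bladeF (p := p) (q := q) (r := r) ∅ = 1 := by
  simp [bladeF, Finset.sort_empty]

lemma blade_singleton (i : Fin nn) : blade [i] = gen p q r i := by
  simp [blade]

/-- moving a generator past a blade it does not meet -/
lemma gen_blade_comm {i : Fin nn} {l : List (Fin nn)} (h : i ∉ l) :
    gen p q r i * blade l = ((-1 : ℝ) ^ l.length) • (blade l * gen p q r i) := by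
  induction l with
  | nil => simp
  | cons a t ih =>
    have hia : i ≠ a := fun hh => h (hh ▸ List.mem_cons_self (a := a) (l := t))
    have hit : i ∉ t := fun hh => h (List.mem_cons_of_mem a hh)
    rw [blade_cons, ← mul_assoc, gen_anticomm hia, neg_mul, mul_assoc, ih hit]
    simp only [List.length_cons, pow_succ, mul_neg_one, neg_smul, mul_smul_comm, blade_cons,
      mul_assoc]

lemma gen_blade_comm' {i : Fin nn} {l : List (Fin nn)} (h : i ∉ l) :
    blade l * gen p q r i = ((-1 : ℝ) ^ l.length) • (gen p q r i * blade l) := by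
  rw [gen_blade_comm h, smul_smul, ← pow_add, Even.neg_one_pow ⟨_, rfl⟩, one_smul]

/-- generator times blade, when the index is fresh: ordered insertion -/
lemma gen_blade_notMem {i : Fin nn} {l : List (Fin nn)} (h : i ∉ l) :
    ∃ c : ℝ, c ≠ 0 ∧ gen p q r i * blade l
      = c • blade (l.orderedInsert (· ≤ ·) i) := by
  induction l with
  | nil => exact ⟨1, one_ne_zero, by simp [List.orderedInsert]⟩
  | cons a t ih =>
    have hia : i ≠ a := fun hh => h (hh ▸ List.mem_cons_self (a := a) (l := t))
    have hit : i ∉ t := fun hh => h (List.mem_cons_of_mem a hh)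
    by_cases hle : i ≤ a
    · exact ⟨1, one_ne_zero, by rw [List.orderedInsert, if_pos hle]; simp [blade_cons]⟩
    · obtain ⟨c, hc0, hc⟩ := ih hit
      refine ⟨-c, neg_ne_zero.2 hc0, ?_⟩
      rw [List.orderedInsert, if_neg hle, blade_cons, blade_cons, ← mul_assoc,
        gen_anticomm hia, neg_mul, mul_assoc, hc]
      simp only [mul_smul_comm, neg_smul]

/-- generator times blade, when the index occurs: erase it -/
lemma gen_blade_mem {i : Fin nn} {l : List (Fin nn)} (h : i ∈ l) :
    ∃ c : ℝ, c ≠ 0 ∧ gen p q r i * blade l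
      = (c * w (p := p) (q := q) (r := r) i) • blade (l.erase i) := by
  induction l with
  | nil => simp at h
  | cons a t ih =>
    by_cases hia : i = a
    · subst hia
      refine ⟨1, one_ne_zero, ?_⟩
      rw [List.erase_cons_head, blade_cons, ← mul_assoc, gen_sq, one_mul]
      rw [Algebra.algebraMap_eq_smul_one, smul_mul_assoc, one_mul]
    · have hit : i ∈ t := by
        rcases List.mem_cons.1 h with h' | h'
        · exact absurd h' hia
        · exact h'
      obtain ⟨c, hc0, hc⟩ := ih hit
      refine ⟨-c, neg_ne_zero.2 hc0, ?_⟩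
      rw [List.erase_cons_tail (by simp [Ne.symm hia])]
      rw [blade_cons, ← mul_assoc, gen_anticomm hia, neg_mul, mul_assoc, hc, blade_cons]
      simp only [mul_smul_comm, neg_smul, neg_mul]

/-! ### sorted lists vs finsets -/

lemma sort_toFinset_eq {l : List (Fin nn)} (hl : l.Pairwise (· < ·)) :
    l.toFinset.sort (· ≤ ·) = l := by
  refine List.Perm.eq_of_pairwise' (Finset.pairwise_sort _ _) (hl.imp le_of_lt) ?_
  refine List.perm_of_nodup_nodup_toFinset_eq (Finset.sort_nodup _ _) hl.nodup ?_
  rw [Finset.sort_toFinset]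

lemma bladeF_toFinset {l : List (Fin nn)} (hl : l.Pairwise (· < ·)) :
    bladeF l.toFinset = blade l := by
  rw [bladeF, sort_toFinset_eq hl]

lemma genF_notMem {i : Fin nn} {V : Finset (Fin nn)} (h : i ∉ V) :
    ∃ c : ℝ, c ≠ 0 ∧ gen p q r i * bladeF V = c • bladeF (insert i V) := by
  have hml : i ∉ V.sort (· ≤ ·) := fun hh => h (by
    have := Finset.mem_sort (α := Fin nn) (· ≤ ·) |>.1 hh
    exact this)
  obtain ⟨c, hc0, hc⟩ := gen_blade_notMem (p := p) (q := q) (r := r) hml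
  refine ⟨c, hc0, ?_⟩
  rw [bladeF, hc]
  congr 2
  -- sort (insert i V) = orderedInsert i (sort V)
  refine (List.Perm.eq_of_pairwise' (Finset.pairwise_sort _ _)
    ((Finset.pairwise_sort V _).orderedInsert i _) ?_).symm
  refine List.perm_of_nodup_nodup_toFinset_eq (Finset.sort_nodup _ _) ?_ ?_
  · exact ((List.perm_orderedInsert _ i _).nodup_iff).2 (List.nodup_cons.2
      ⟨hml, Finset.sort_nodup _ _⟩)
  · rw [Finset.sort_toFinset]
    ext x
    rw [List.mem_toFinset, (List.perm_orderedInsert _ i _).mem_iff]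
    simp [Finset.mem_insert, Finset.mem_sort]

lemma genF_mem {i : Fin nn} {V : Finset (Fin nn)} (h : i ∈ V) :
    ∃ c : ℝ, c ≠ 0 ∧ gen p q r i * bladeF V
      = (c * w (p := p) (q := q) (r := r) i) • bladeF (V.erase i) := by
  have hml : i ∈ V.sort (· ≤ ·) := (Finset.mem_sort _).2 h
  obtain ⟨c, hc0, hc⟩ := gen_blade_mem (p := p) (q := q) (r := r) hml
  refine ⟨c, hc0, ?_⟩
  rw [bladeF, hc]
  congr 2
  -- (sort V).erase i = sort (V.erase i)
  refine List.Perm.eq_of_pairwise'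
    (((Finset.pairwise_sort V _)).erase _) (Finset.pairwise_sort _ _) ?_
  refine List.perm_of_nodup_nodup_toFinset_eq ((Finset.sort_nodup _ _).erase _)
    (Finset.sort_nodup _ _) ?_
  ext x
  rw [List.mem_toFinset, (Finset.sort_nodup V _).mem_erase_iff]
  simp [Finset.mem_sort, Finset.mem_erase]

lemma genF_mul {i : Fin nn} (V : Finset (Fin nn)) :
    ∃ y ∈ Submodule.span ℝ (Set.range (bladeF (p := p) (q := q) (r := r))),
      gen p q r i * bladeF V = y := by
  by_cases h : i ∈ V
  · obtain ⟨c, _, hc⟩ := genF_mem (p := p) (q := q) (r := r) h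
    exact ⟨_, Submodule.smul_mem _ _ (Submodule.subset_span ⟨_, rfl⟩), hc⟩
  · obtain ⟨c, _, hc⟩ := genF_notMem (p := p) (q := q) (r := r) h
    exact ⟨_, Submodule.smul_mem _ _ (Submodule.subset_span ⟨_, rfl⟩), hc⟩

lemma iota_eq_sum (v : Fin nn → ℝ) :
    ι (Qf p q r) v = ∑ i, v i • gen p q r i := by
  have hv : v = ∑ i, v i • (Pi.single i (1:ℝ) : Fin nn → ℝ) := by
    funext j
    rw [Finset.sum_apply]
    simp only [Pi.smul_apply, Pi.single_apply, smul_eq_mul, mul_ite, mul_one, mul_zero]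
    rw [Finset.sum_ite_eq Finset.univ j v]
    simp
  calc ι (Qf p q r) v = ι (Qf p q r) (∑ i, v i • (Pi.single i (1:ℝ) : Fin nn → ℝ)) := by
        rw [← hv]
    _ = ∑ i, v i • gen p q r i := by
        rw [map_sum]
        refine Finset.sum_congr rfl fun i _ => ?_
        rw [map_smul, gen]

lemma span_bladeF_eq_top :
    Submodule.span ℝ (Set.range (bladeF (p := p) (q := q) (r := r))) = ⊤ := by
  set M := Submodule.span ℝ (Set.range (bladeF (p := p) (q := q) (r := r))) with hM
  have hone : (1 : CliffordAlgebra (Qf p q r)) ∈ M :=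
    Submodule.subset_span ⟨∅, by simp⟩
  have hgen : ∀ (i : Fin nn), ∀ x ∈ M, gen p q r i * x ∈ M := by
    intro i x hx
    induction hx using Submodule.span_induction with
    | mem y hy =>
      obtain ⟨V, rfl⟩ := hy
      obtain ⟨y, hy, hEq⟩ := genF_mul (p := p) (q := q) (r := r) (i := i) V
      rw [hEq]; exact hy
    | zero => simp
    | add y z _ _ hy hz => rw [mul_add]; exact add_mem hy hz
    | smul c y _ hy => rw [mul_smul_comm]; exact Submodule.smul_mem _ _ hy
  have hmul : ∀ z : CliffordAlgebra (Qf p q r), ∀ x ∈ M, z * x ∈ M := by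
    intro z
    induction z using CliffordAlgebra.induction with
    | algebraMap c =>
      intro x hx
      rw [Algebra.algebraMap_eq_smul_one, smul_mul_assoc, one_mul]
      exact Submodule.smul_mem _ _ hx
    | ι v =>
      intro x hx
      rw [iota_eq_sum, Finset.sum_mul]
      refine Submodule.sum_mem _ fun i _ => ?_
      rw [smul_mul_assoc]
      exact Submodule.smul_mem _ _ (hgen i x hx)
    | mul a b ha hb =>
      intro x hx
      rw [mul_assoc]
      exact ha _ (hb _ hx)
    | add a b ha hb =>
      intro x hx
      rw [add_mul]
      exact add_mem (ha _ hx) (hb _ hx)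
  rw [eq_top_iff]
  intro z _
  have := hmul z 1 hone
  rwa [mul_one] at this

/-! ### theta on blades -/

lemma eps_of_lt_all {i : Fin nn} {V : Finset (Fin nn)} (h : ∀ j ∈ V, i < j) :
    eps i V = 1 := by
  unfold eps
  rw [Finset.filter_eq_empty_iff.2 (fun {j} hj => not_lt.2 (h j hj).le)]
  simp

lemma theta_blade {l : List (Fin nn)} (hl : l.Pairwise (· < ·)) :
    theta p q r (blade l) = Pi.single l.toFinset 1 := by
  induction l with
  | nil =>
    show rep p q r 1 (Pi.single ∅ 1) = _
    rw [map_one]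
    rfl
  | cons i t ih =>
    have hit : ∀ j ∈ t.toFinset, i < j := by
      intro j hj
      exact List.rel_of_pairwise_cons hl (List.mem_toFinset.1 hj)
    have hmem : i ∉ t.toFinset := fun hh => lt_irrefl i (hit i hh)
    show rep p q r (gen p q r i * blade t) (Pi.single ∅ 1) = _
    rw [map_mul, rep_gen]
    have ht := ih hl.of_cons
    show cop i (theta p q r (blade t)) = _
    rw [ht]
    funext W
    rw [cop_apply]
    by_cases hiW : i ∈ W
    · rw [if_pos hiW]
      by_cases hW : W = insert i t.toFinset
      · have : W.erase i = t.toFinset := by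
          rw [hW, Finset.erase_insert hmem]
        rw [this, Pi.single_eq_same, hW, eps_insert_of_ge _ (lt_irrefl i),
          eps_of_lt_all hit, List.toFinset_cons]
        rw [Pi.single_eq_same]
        ring
      · have h1 : W.erase i ≠ t.toFinset := by
          intro hh
          exact hW (by rw [← hh, Finset.insert_erase hiW])
        rw [Pi.single_eq_of_ne h1, List.toFinset_cons, Pi.single_eq_of_ne hW]
        ring
    · rw [if_neg hiW]
      have h1 : insert i W ≠ t.toFinset := by
        intro hh
        exact hmem (hh ▸ Finset.mem_insert_self i W)
      have h2 : W ≠ (i :: t).toFinset := by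
        intro hh
        rw [hh, List.toFinset_cons] at hiW
        exact hiW (Finset.mem_insert_self i _)
      rw [Pi.single_eq_of_ne h1, Pi.single_eq_of_ne h2]
      ring

lemma theta_bladeF (V : Finset (Fin nn)) :
    theta p q r (bladeF V) = Pi.single V 1 := by
  have hs : (V.sort (· ≤ ·)).Pairwise (· < ·) := List.sortedLT_iff_pairwise.1 (Finset.sortedLT_sort V)
  rw [bladeF, theta_blade hs, Finset.sort_toFinset]

lemma bladeF_scalar_cancel {V : Finset (Fin nn)} {a b : ℝ}
    (h : a • bladeF (p := p) (q := q) (r := r) V = b • bladeF V) : a = b := by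
  have := congrArg (theta p q r) h
  rw [map_smul, map_smul, theta_bladeF] at this
  have := congrFun this V
  simpa using this

/-- coordinate expansion -/
lemma coord_expand (x : CliffordAlgebra (Qf p q r)) :
    x = ∑ U : Finset (Fin nn), theta p q r x U • bladeF U := by
  have hx : x ∈ Submodule.span ℝ (Set.range (bladeF (p := p) (q := q) (r := r))) := by
    rw [span_bladeF_eq_top]; trivial
  induction hx using Submodule.span_induction with
  | mem y hy =>
    obtain ⟨V, rfl⟩ := hy
    rw [theta_bladeF]
    rw [Finset.sum_eq_single V]
    · rw [Pi.single_eq_same, one_smul]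
    · intro U _ hU
      rw [Pi.single_eq_of_ne hU, zero_smul]
    · intro h; exact absurd (Finset.mem_univ V) h
  | zero => simp
  | add y z _ _ hy hz =>
    nth_rewrite 1 [hy, hz]
    rw [← Finset.sum_add_distrib]
    refine Finset.sum_congr rfl fun U _ => ?_
    rw [map_add, Pi.add_apply, add_smul]
  | smul c y _ hy =>
    nth_rewrite 1 [hy]
    rw [Finset.smul_sum]
    refine Finset.sum_congr rfl fun U _ => ?_
    rw [map_smul, Pi.smul_apply, smul_eq_mul, smul_smul]

/-! ### swap lemmas -/

lemma gen_blade_comm_mem {i : Fin nn} {l : List (Fin nn)} (h : i ∈ l) (hnd : l.Nodup) :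
    gen p q r i * blade l = ((-1 : ℝ) ^ (l.length + 1)) • (blade l * gen p q r i) := by
  induction l with
  | nil => simp at h
  | cons a t ih =>
    by_cases hia : i = a
    · subst hia
      have hit : i ∉ t := (List.nodup_cons.1 hnd).1
      rw [blade_cons, ← mul_assoc, gen_sq, Algebra.algebraMap_eq_smul_one, smul_mul_assoc,
        one_mul]
      rw [List.length_cons, mul_assoc, gen_blade_comm' hit, mul_smul_comm, ← mul_assoc, gen_sq,
        Algebra.algebraMap_eq_smul_one, smul_mul_assoc, one_mul, smul_smul, smul_smul]
      congr 1
      rw [← pow_add, show t.length + 1 + 1 + t.length = 2 * (t.length + 1) from by ring, pow_mul]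
      norm_num
    · have hit : i ∈ t := by
        rcases List.mem_cons.1 h with h' | h'
        · exact absurd h' hia
        · exact h'
      rw [blade_cons, ← mul_assoc, gen_anticomm hia, neg_mul, mul_assoc,
        ih hit (List.nodup_cons.1 hnd).2]
      simp only [List.length_cons, pow_succ, mul_neg_one, neg_smul, neg_neg, mul_neg,
        mul_smul_comm, mul_assoc]
      simp [mul_one, neg_smul, neg_neg]

lemma blade_swap {l l' : List (Fin nn)} (hnd : l.Nodup) (hnd' : l'.Nodup) :
    blade l * blade l' = ((-1 : ℝ) ^ (l.length * l'.length + (l.toFinset ∩ l'.toFinset).card))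
      • (blade l' * blade l) := by
  induction l with
  | nil => simp
  | cons i t ih =>
    have hit : i ∉ t := (List.nodup_cons.1 hnd).1
    have hndt : t.Nodup := (List.nodup_cons.1 hnd).2
    rw [blade_cons, mul_assoc, ih hndt, mul_smul_comm, ← mul_assoc]
    by_cases hil' : i ∈ l'
    · rw [gen_blade_comm_mem hil' hnd', smul_mul_assoc, smul_smul, ← pow_add, mul_assoc,
        ← blade_cons]
      congr 2
      have hi1 : i ∈ l'.toFinset := List.mem_toFinset.2 hil'
      have hi2 : i ∉ t.toFinset ∩ l'.toFinset := by
        rw [Finset.mem_inter]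
        exact fun hh => hit (List.mem_toFinset.1 hh.1)
      rw [List.toFinset_cons, Finset.insert_inter_of_mem hi1,
        Finset.card_insert_of_notMem hi2, List.length_cons]
      ring
    · rw [gen_blade_comm hil', smul_mul_assoc, smul_smul, ← pow_add, mul_assoc, ← blade_cons]
      congr 2
      have hi1 : i ∉ l'.toFinset := fun hh => hil' (List.mem_toFinset.1 hh)
      rw [List.toFinset_cons, Finset.insert_inter_of_notMem hi1, List.length_cons]
      ring

lemma bladeF_swap (U T : Finset (Fin nn)) :
    bladeF U * bladeF T = ((-1 : ℝ) ^ (U.card * T.card + (U ∩ T).card))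
      • (bladeF (p := p) (q := q) (r := r) T * bladeF U) := by
  have h := blade_swap (p := p) (q := q) (r := r)
    (Finset.sort_nodup U (· ≤ ·)) (Finset.sort_nodup T (· ≤ ·))
  rw [Finset.sort_toFinset, Finset.sort_toFinset, Finset.length_sort, Finset.length_sort] at h
  exact h

/-! ### products of blades -/

lemma blade_mul_bladeF {l : List (Fin nn)} (hnd : l.Nodup) (T : Finset (Fin nn)) :
    ∃ c : ℝ, blade l * bladeF T = c • bladeF (symmDiff l.toFinset T)
      ∧ ((∀ i ∈ l, i ∈ T → w (p := p) (q := q) (r := r) i ≠ 0) → c ≠ 0)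
      ∧ (∀ i ∈ l, i ∈ T → w (p := p) (q := q) (r := r) i = 0 → c = 0) := by
  induction l with
  | nil =>
    refine ⟨1, ?_, fun _ => one_ne_zero, fun i hi => absurd hi List.not_mem_nil⟩
    simp [symmDiff]
  | cons i t ih =>
    have hit : i ∉ t := (List.nodup_cons.1 hnd).1
    have hndt : t.Nodup := (List.nodup_cons.1 hnd).2
    obtain ⟨ct, hct, hctnz, hctz⟩ := ih hndt
    have hitF : i ∉ t.toFinset := fun hh => hit (List.mem_toFinset.1 hh)
    by_cases hiT : i ∈ T
    · have hisd : i ∈ symmDiff t.toFinset T := by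
        rw [Finset.mem_symmDiff]
        exact Or.inr ⟨hiT, hitF⟩
      obtain ⟨c', hc'0, hc'⟩ := genF_mem (p := p) (q := q) (r := r) hisd
      have hset : (symmDiff t.toFinset T).erase i = symmDiff (i :: t).toFinset T := by
        ext x
        by_cases hx : x = i
        · subst hx
          simp [Finset.mem_symmDiff, hiT]
        · simp [Finset.mem_erase, Finset.mem_symmDiff, hx, List.toFinset_cons,
            Finset.mem_insert]
      refine ⟨ct * (c' * w (p := p) (q := q) (r := r) i), ?_, ?_, ?_⟩
      · rw [blade_cons, mul_assoc, hct, mul_smul_comm, hc', hset, smul_smul]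
      · intro hall
        have h1 : ct ≠ 0 := hctnz fun j hj hjT => hall j (List.mem_cons_of_mem i hj) hjT
        have h2 : w (p := p) (q := q) (r := r) i ≠ 0 :=
          hall i (List.mem_cons_self (a := i) (l := t)) hiT
        exact mul_ne_zero h1 (mul_ne_zero hc'0 h2)
      · intro j hj hjT hw
        rcases List.mem_cons.1 hj with hji | hjt
        · subst hji
          rw [hw]; ring
        · rw [hctz j hjt hjT hw]; ring
    · have hisd : i ∉ symmDiff t.toFinset T := by
        rw [Finset.mem_symmDiff]
        rintro (⟨h1, _⟩ | ⟨h1, _⟩)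
        · exact hitF h1
        · exact hiT h1
      obtain ⟨c', hc'0, hc'⟩ := genF_notMem (p := p) (q := q) (r := r) hisd
      have hset : insert i (symmDiff t.toFinset T) = symmDiff (i :: t).toFinset T := by
        ext x
        by_cases hx : x = i
        · subst hx
          simp [Finset.mem_symmDiff, hiT, List.toFinset_cons]
        · simp [Finset.mem_insert, Finset.mem_symmDiff, hx, List.toFinset_cons]
      refine ⟨ct * c', ?_, ?_, ?_⟩
      · rw [blade_cons, mul_assoc, hct, mul_smul_comm, hc', hset, smul_smul]
      · intro hall
        exact mul_ne_zero (hctnz fun j hj hjT => hall j (List.mem_cons_of_mem i hj) hjT) hc'0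
      · intro j hj hjT hw
        rcases List.mem_cons.1 hj with hji | hjt
        · subst hji; exact absurd hjT hiT
        · rw [hctz j hjt hjT hw]; ring

/-- packaged product-pair facts -/
lemma pairP (U T : Finset (Fin nn)) :
    ∃ c c' : ℝ, bladeF (p := p) (q := q) (r := r) U * bladeF T = c • bladeF (symmDiff U T)
      ∧ bladeF T * bladeF U = c' • bladeF (symmDiff U T)
      ∧ ((∀ i ∈ U ∩ T, w (p := p) (q := q) (r := r) i ≠ 0) → c ≠ 0)
      ∧ ((∃ i ∈ U ∩ T, w (p := p) (q := q) (r := r) i = 0) → c = 0 ∧ c' = 0)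
      ∧ (Odd (U.card * T.card + (U ∩ T).card) → c' = -c)
      ∧ (Even (U.card * T.card + (U ∩ T).card) → c' = c) := by
  obtain ⟨c, hc, hcnz, hcz⟩ := blade_mul_bladeF (p := p) (q := q) (r := r)
    (Finset.sort_nodup U (· ≤ ·)) T
  rw [Finset.sort_toFinset] at hc
  obtain ⟨c', hc', _, hc'z⟩ := blade_mul_bladeF (p := p) (q := q) (r := r)
    (Finset.sort_nodup T (· ≤ ·)) U
  rw [Finset.sort_toFinset, symmDiff_comm] at hc'
  have hcU : bladeF (p := p) (q := q) (r := r) U * bladeF T = c • bladeF (symmDiff U T) := hc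
  have hc'U : bladeF (p := p) (q := q) (r := r) T * bladeF U = c' • bladeF (symmDiff U T) := hc'
  clear hc hc'
  have hc := hcU
  have hc' := hc'U
  have hswap := bladeF_swap (p := p) (q := q) (r := r) U T
  rw [hc, hc'] at hswap
  rw [smul_smul] at hswap
  have hkey : c = (-1 : ℝ) ^ (U.card * T.card + (U ∩ T).card) * c' :=
    bladeF_scalar_cancel hswap
  refine ⟨c, c', hc, hc', ?_, ?_, ?_, ?_⟩
  · intro hall
    exact hcnz fun i hi hiT =>
      hall i (Finset.mem_inter.2 ⟨(Finset.mem_sort _).1 hi, hiT⟩)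
  · rintro ⟨i, hi, hwi⟩
    rw [Finset.mem_inter] at hi
    constructor
    · exact hcz i ((Finset.mem_sort _).2 hi.1) hi.2 hwi
    · exact hc'z i ((Finset.mem_sort _).2 hi.2) hi.1 hwi
  · intro hodd
    rw [hkey, Odd.neg_one_pow hodd]
    ring
  · intro heven
    rw [hkey, Even.neg_one_pow heven]
    ring

/-! ### main machinery -/

lemma commutator_eq_sum (X : CliffordAlgebra (Qf p q r)) (T : Finset (Fin nn))
    (c c' : Finset (Fin nn) → ℝ)
    (h1 : ∀ U, bladeF (p := p) (q := q) (r := r) U * bladeF T = c U • bladeF (symmDiff U T))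
    (h2 : ∀ U, bladeF (p := p) (q := q) (r := r) T * bladeF U = c' U • bladeF (symmDiff U T)) :
    X * bladeF T - bladeF T * X
      = ∑ U, (theta p q r X U * (c U - c' U)) • bladeF (symmDiff U T) := by
  have e1 : X * bladeF T = ∑ U, (theta p q r X U * c U) • bladeF (symmDiff U T) := by
    conv_lhs => rw [coord_expand X]
    rw [Finset.sum_mul]
    refine Finset.sum_congr rfl fun U _ => ?_
    rw [smul_mul_assoc, h1 U, smul_smul]
  have e2 : bladeF T * X = ∑ U, (theta p q r X U * c' U) • bladeF (symmDiff U T) := by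
    conv_lhs => rw [coord_expand X]
    rw [Finset.mul_sum]
    refine Finset.sum_congr rfl fun U _ => ?_
    rw [mul_smul_comm, h2 U, smul_smul]
  rw [e1, e2, ← Finset.sum_sub_distrib]
  refine Finset.sum_congr rfl fun U _ => ?_
  rw [← sub_smul]
  congr 1
  ring

lemma sum_coeff_zero {f : Finset (Fin nn) → ℝ} {T : Finset (Fin nn)}
    (h : ∑ U, f U • bladeF (p := p) (q := q) (r := r) (symmDiff U T) = 0)
    (U₀ : Finset (Fin nn)) : f U₀ = 0 := by
  have h2 := congrArg (theta p q r) h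
  rw [map_sum, map_zero] at h2
  have h3 := congrFun h2 (symmDiff U₀ T)
  rw [Finset.sum_apply] at h3
  rw [Finset.sum_eq_single U₀] at h3
  · rw [map_smul, theta_bladeF, Pi.smul_apply, Pi.single_eq_same] at h3
    simpa using h3
  · intro U _ hU
    rw [map_smul, theta_bladeF, Pi.smul_apply,
      Pi.single_eq_of_ne (((symmDiff_left_injective T).ne hU).symm)]
    simp
  · intro hh
    exact absurd (Finset.mem_univ U₀) hh

lemma bladeF_mem_grade (T : Finset (Fin nn)) :
    bladeF (p := p) (q := q) (r := r) T ∈ gradeSubspace p q r T.card := by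
  refine Submodule.subset_span ⟨T.sort (· ≤ ·), ?_, Finset.length_sort _, rfl⟩
  exact List.isChain_iff_pairwise.2 (List.sortedLT_iff_pairwise.1 (Finset.sortedLT_sort T))

lemma coeff_eq_zero {m : ℕ} (X : CliffordAlgebra (Qf p q r))
    (hX : ∀ V ∈ gradeSubspace p q r m, X * V = V * X)
    {U₀ T : Finset (Fin nn)} (hTcard : T.card = m)
    (hodd : Odd (U₀.card * T.card + (U₀ ∩ T).card))
    (hnn : ∀ i ∈ U₀ ∩ T, w (p := p) (q := q) (r := r) i ≠ 0) :
    theta p q r X U₀ = 0 := by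
  have hcomm : X * bladeF T = bladeF T * X :=
    hX (bladeF T) (hTcard ▸ bladeF_mem_grade T)
  have hpair := fun U : Finset (Fin nn) => pairP (p := p) (q := q) (r := r) U T
  choose c c' h1 h2 h3 h4 h5 h6 using hpair
  have hzero : ∑ U, (theta p q r X U * (c U - c' U)) • bladeF (symmDiff U T) = 0 := by
    rw [← commutator_eq_sum X T c c' h1 h2, hcomm, sub_self]
  have hco := sum_coeff_zero hzero U₀
  have hC : c' U₀ = - c U₀ := h5 U₀ hodd
  have hCnz : c U₀ ≠ 0 := h3 U₀ hnn
  rw [hC] at hco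
  have : theta p q r X U₀ * (2 * c U₀) = 0 := by linarith [hco]
  rcases mul_eq_zero.1 this with h | h
  · exact h
  · exact absurd h (by simpa using hCnz)

lemma exists_T {m : ℕ} (hm : Odd m) {U S : Finset (Fin nn)} (hS : S.card = m + 1)
    (hUS : Odd ((U ∩ S).card)) :
    ∃ T : Finset (Fin nn), T.card = m ∧ Odd (U.card * T.card + (U ∩ T).card)
      ∧ U ∩ T ⊆ U ∩ S := by
  set n := Fintype.card (Fin nn) with hn
  set u := U.card with hu
  set Nc := (U ∩ S).card with hNc
  have hNu : Nc ≤ u := Finset.card_le_card Finset.inter_subset_left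
  have hNm : Nc ≤ m + 1 := hS ▸ Finset.card_le_card Finset.inter_subset_right
  have hun : u ≤ n := Finset.card_le_univ U
  have hmn : m + 1 ≤ n := hS ▸ Finset.card_le_univ S
  have hbound : u + (m + 1) ≤ Nc + n := by
    have h1 := Finset.card_union_add_card_inter U S
    have h2 : (U ∪ S).card ≤ n := Finset.card_le_univ _
    omega
  have hm2 : m % 2 = 1 := Nat.odd_iff.1 hm
  have hN2 : Nc % 2 = 1 := Nat.odd_iff.1 hUS
  set cc := if u % 2 = 0 then min m Nc else if u + m ≤ n then 0 else Nc - 1 with hcc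
  have hc1 : cc ≤ Nc := by rw [hcc]; split_ifs <;> omega
  have hc2 : cc ≤ m := by rw [hcc]; split_ifs <;> omega
  have hc3 : m - cc ≤ n - u := by rw [hcc]; split_ifs <;> omega
  have hc4 : (u + cc) % 2 = 1 := by rw [hcc]; split_ifs <;> omega
  obtain ⟨C, hCsub, hCcard⟩ := Finset.exists_subset_card_eq hc1
  have hD0 : m - cc ≤ (Finset.univ \ U).card := by
    rw [Finset.card_sdiff_of_subset (Finset.subset_univ U)]
    exact hc3
  obtain ⟨D, hDsub, hDcard⟩ := Finset.exists_subset_card_eq hD0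
  have hCU : C ⊆ U := hCsub.trans Finset.inter_subset_left
  have hDU : Disjoint U D := Finset.disjoint_left.2 fun x hxU hxD =>
    (Finset.mem_sdiff.1 (hDsub hxD)).2 hxU
  have hCD : Disjoint C D := Finset.disjoint_left.2 fun x hxC hxD =>
    (Finset.mem_sdiff.1 (hDsub hxD)).2 (hCU hxC)
  have hUT : U ∩ (C ∪ D) = C := by
    rw [Finset.inter_union_distrib_left, Finset.inter_eq_right.2 hCU,
      Finset.disjoint_iff_inter_eq_empty.1 hDU, Finset.union_empty]
  have hTc : (C ∪ D).card = m := by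
    rw [Finset.card_union_of_disjoint hCD, hCcard, hDcard]
    omega
  refine ⟨C ∪ D, hTc, ?_, ?_⟩
  · rw [hUT, hTc, hCcard]
    rcases Nat.even_or_odd u with he | ho
    · have hue := Nat.even_iff.1 he
      exact (he.mul_right m).add_odd (Nat.odd_iff.2 (by omega))
    · have huo := Nat.odd_iff.1 ho
      exact (ho.mul hm).add_even (Nat.even_iff.2 (by omega))
  · rw [hUT]
    exact hCsub.trans (le_refl _)

end Stmt6Aux

/-- `Λ_r`: the subalgebra generated by the `r` null generators. -/
def LambdaR (p q r : ℕ) : Subalgebra ℝ (CliffordAlgebra (Qf p q r)) :=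
  Algebra.adjoin ℝ {x | ∃ i : Fin (p + q + r), p + q ≤ (i : ℕ) ∧ x = gen p q r i}

/-- `Λ^d_r`: the degree-`d` component of `Λ_r`. -/
def LambdaDeg (p q r d : ℕ) : Submodule ℝ (CliffordAlgebra (Qf p q r)) :=
  Submodule.span ℝ {x | ∃ l : List (Fin (p + q + r)),
    l.Chain' (· < ·) ∧ l.length = d ∧ (∀ i ∈ l, p + q ≤ (i : ℕ)) ∧
    x = (l.map (gen p q r)).prod}

/-- The pseudoscalar `e_1 ⋯ e_n`. -/
def pseudoscalar (p q r : ℕ) : CliffordAlgebra (Qf p q r) :=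
  ((List.finRange (p + q + r)).map (gen p q r)).prod

/-- For odd `m`, the centralizer of the grade-`m` subspace is contained in the centralizer
of the grade-`(m+1)` subspace. -/
theorem stmt6 (p q r m : ℕ) (hm : Odd m) (X : CliffordAlgebra (Qf p q r))
    (hX : ∀ V ∈ gradeSubspace p q r m, X * V = V * X) :
    ∀ V ∈ gradeSubspace p q r (m + 1), X * V = V * X := by
  intro V hV
  induction hV using Submodule.span_induction with
  | mem x hx =>
    obtain ⟨l, hch, hlen, hEq⟩ := hx
    subst hEq
    have hsorted : l.Pairwise (· < ·) := List.isChain_iff_pairwise.1 hch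
    have hbl : (l.map (gen p q r)).prod = Stmt6Aux.bladeF l.toFinset := by
      rw [Stmt6Aux.bladeF_toFinset hsorted]; rfl
    rw [hbl]
    set S := l.toFinset with hS
    have hScard : S.card = m + 1 := by
      rw [hS, List.toFinset_card_of_nodup hsorted.nodup]
      exact hlen
    rw [← sub_eq_zero]
    have hpair := fun U : Finset (Fin (p + q + r)) =>
      Stmt6Aux.pairP (p := p) (q := q) (r := r) U S
    choose c c' h1 h2 h3 h4 h5 h6 using hpair
    rw [Stmt6Aux.commutator_eq_sum X S c c' h1 h2]
    refine Finset.sum_eq_zero fun U _ => ?_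
    rcases Nat.even_or_odd ((U ∩ S).card) with hev | hod
    · have heven : Even (U.card * S.card + (U ∩ S).card) := by
        refine Even.add ?_ hev
        rw [hScard]
        exact (hm.add_one).mul_left U.card
      rw [h6 U heven, sub_self, mul_zero, zero_smul]
    · by_cases hnull : ∀ i ∈ U ∩ S, Stmt6Aux.w (p := p) (q := q) (r := r) i ≠ 0
      · obtain ⟨T, hTc, hToddExp, hTsub⟩ := Stmt6Aux.exists_T hm hScard hod
        have hthz : Stmt6Aux.theta p q r X U = 0 :=
          Stmt6Aux.coeff_eq_zero X hX hTc hToddExp (fun i hi => hnull i (hTsub hi))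
        rw [hthz, zero_mul, zero_smul]
      · push_neg at hnull
        obtain ⟨i, hi, hwi⟩ := hnull
        obtain ⟨hc0, hc'0⟩ := h4 U ⟨i, hi, hwi⟩
        rw [hc0, hc'0, sub_self, mul_zero, zero_smul]
  | zero => simp
  | add x y _ _ hx hy => rw [mul_add, add_mul, hx, hy]
  | smul a x _ hx => rw [mul_smul_comm, smul_mul_assoc, hx]
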